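/- Every tournament T has a vertex v with the second neighborhood property, i.e., |N^+(v)| ≤ |N^{++}(v)|. -/

import Mathlib

variable {V : Type*}

/-- Out-neighborhood of `v`. -/
def Nplus (A : V → V → Prop) (v : V) : Set V := {u | A v u}

/-- In-neighborhood of `v`. -/
def Nminus (A : V → V → Prop) (v : V) : Set V := {u | A u v}

/-- Second out-neighborhood: vertices at directed distance exactly 2 from `v`. -/
def Npp (A : V → V → Prop) (v : V) : Set V :=
  {u | u ≠ v ∧ ¬ A v u ∧ ∃ w, A v w ∧ A w u}

/-- The second neighborhood property. -/
def SNP (A : V → V → Prop) (v : V) : Prop := (Nplus A v).ncard ≤ (Npp A v).ncard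

/-- A digraph (given by its arc relation) has no digons: no 2-cycles (this also rules out loops when stated for `u = v`). -/
def NoDigons (A : V → V → Prop) : Prop := ∀ u v, ¬ (A u v ∧ A v u)

/-- A tournament: an orientation of a complete graph. -/
def IsTournament (A : V → V → Prop) : Prop :=
  (∀ v, ¬ A v v) ∧ ∀ u v : V, u ≠ v → (A u v ↔ ¬ A v u)

/-- `u v` is a missing edge: distinct and non-adjacent. -/
def MissingEdge (A : V → V → Prop) (u v : V) : Prop := u ≠ v ∧ ¬ A u v ∧ ¬ A v u

/-- `x₁y₁` loses to `x₂y₂` (with this labelling of endpoints). -/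
def LosesAt (A : V → V → Prop) (x₁ y₁ x₂ y₂ : V) : Prop :=
  A x₁ x₂ ∧ ¬ A x₁ y₂ ∧ y₂ ∉ Npp A x₁ ∧ A y₁ y₂ ∧ ¬ A y₁ x₂ ∧ x₂ ∉ Npp A y₁

/-- The losing relation between (unordered) missing edges: the arcs of the dependency digraph. -/
def EdgeLoses (A : V → V → Prop) (e e' : Sym2 V) : Prop :=
  ∃ x₁ y₁ x₂ y₂, e = s(x₁, y₁) ∧ e' = s(x₂, y₂) ∧
    MissingEdge A x₁ y₁ ∧ MissingEdge A x₂ y₂ ∧ LosesAt A x₁ y₁ x₂ y₂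
section Aux
variable {V : Type*}

section DecAux
variable (A : V → V → Prop) [DecidableRel A]

private def cross (a b : List V) : ℕ :=
  (a.map (fun u => b.countP (fun w => decide (A u w)))).sum

private def fw : List V → ℕ
  | [] => 0
  | x :: xs => xs.countP (fun u => decide (A x u)) + fw xs

private lemma cross_nil (b : List V) : cross A [] b = 0 := rfl

private lemma cross_cons (y : V) (a b : List V) :
    cross A (y :: a) b = b.countP (fun w => decide (A y w)) + cross A a b := by
  simp [cross]

private lemma fw_cons (x : V) (xs : List V) :
    fw A (x :: xs) = xs.countP (fun u => decide (A x u)) + fw A xs := rfl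

private lemma fw_append (a b : List V) :
    fw A (a ++ b) = fw A a + cross A a b + fw A b := by
  induction a with
  | nil => simp [fw, cross_nil]
  | cons x a ih =>
      rw [List.cons_append, fw_cons, fw_cons, List.countP_append, ih, cross_cons]
      omega

private lemma cross_cons_right (a : List V) (x : V) (q : List V) :
    cross A a (x :: q) = a.countP (fun u => decide (A u x)) + cross A a q := by
  induction a with
  | nil => simp [cross_nil]
  | cons y a ih =>
      rw [cross_cons, cross_cons, ih, List.countP_cons, List.countP_cons]
      by_cases h : A y x <;> simp [h] <;> omega

private lemma cross_perm (a : List V) {b b' : List V} (h : b.Perm b') :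
    cross A a b = cross A a b' := by
  unfold cross
  congr 1
  exact List.map_congr_left fun u _ => h.countP_eq _

private lemma fw_swap (t p : List V) (x : V) (q : List V) :
    fw A (t ++ p ++ x :: q) + p.countP (fun u => decide (A x u)) =
      fw A (t ++ x :: (p ++ q)) + p.countP (fun u => decide (A u x)) := by
  have h1 : fw A (t ++ p ++ x :: q) = fw A t + cross A t (p ++ x :: q)
      + (fw A p + (p.countP (fun u => decide (A u x)) + cross A p q)
        + (q.countP (fun u => decide (A x u)) + fw A q)) := by
    rw [List.append_assoc, fw_append, fw_append, cross_cons_right, fw_cons]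
  have h2 : fw A (t ++ x :: (p ++ q)) = fw A t + cross A t (x :: (p ++ q))
      + ((p ++ q).countP (fun u => decide (A x u)) + (fw A p + cross A p q + fw A q)) := by
    rw [fw_append, fw_cons, fw_append]
  have h3 : cross A t (p ++ x :: q) = cross A t (x :: (p ++ q)) :=
    cross_perm A t List.perm_middle
  rw [h1, h2, h3, List.countP_append]
  omega

/-- Local median order property. -/
private def LM (l : List V) : Prop :=
  ∀ t p x q, l = t ++ p ++ x :: q →
    p.countP (fun u => decide (A x u)) ≤ p.countP (fun u => decide (A u x))

private lemma exists_LM [DecidableEq V] (L : List V) : ∃ l, l.Perm L ∧ LM A l := by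
  obtain ⟨l, hl, hmax⟩ :=
    Finset.exists_max_image L.permutations.toFinset (fw A)
      ⟨L, by simp [List.mem_permutations]⟩
  rw [List.mem_toFinset, List.mem_permutations] at hl
  refine ⟨l, hl, ?_⟩
  intro t p x q heq
  have hperm : (t ++ x :: (p ++ q)).Perm l := by
    rw [heq, List.append_assoc]
    exact ((List.perm_middle).symm.append_left t)
  have hmem : (t ++ x :: (p ++ q)) ∈ L.permutations.toFinset := by
    rw [List.mem_toFinset, List.mem_permutations]
    exact hperm.trans hl
  have hle := hmax _ hmem
  have hs := fw_swap A t p x q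
  rw [← heq] at hs
  omega

private lemma exists_first_split {P : V → Prop} :
    ∀ {l : List V}, (∃ x ∈ l, P x) →
      ∃ l₁ x l₂, l = l₁ ++ x :: l₂ ∧ P x ∧ ∀ y ∈ l₁, ¬ P y := by
  intro l
  induction l with
  | nil => simp
  | cons a l ih =>
      intro h
      by_cases ha : P a
      · exact ⟨[], a, l, rfl, ha, by simp⟩
      · obtain ⟨x, hx, hPx⟩ := h
        have hx' : x ∈ l := by
          rcases List.mem_cons.1 hx with rfl | h
          · exact absurd hPx ha
          · exact h
        obtain ⟨l₁, y, l₂, rfl, h1, h2⟩ := ih ⟨x, hx', hPx⟩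
        refine ⟨a :: l₁, y, l₂, rfl, h1, ?_⟩
        intro z hz
        rcases List.mem_cons.1 hz with rfl | h
        · exact ha
        · exact h2 z h

private theorem key (hT : IsTournament A) :
    ∀ (n : ℕ) (p : List V) (v : V), p.length ≤ n → LM A (p ++ [v]) → (p ++ [v]).Nodup →
      p.countP (fun u => decide (A v u)) ≤
        p.countP (fun u => decide ((¬ A v u) ∧ ∃ w ∈ p, A v w ∧ A w u)) := by
  intro n
  induction n with
  | zero =>
      intro p v hlen _ _
      have : p = [] := List.length_eq_zero_iff.1 (Nat.le_zero.1 hlen)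
      subst this; simp
  | succ n ih =>
      intro p v hlen hLM hnd
      have hvp : v ∉ p := by
        rw [List.nodup_append] at hnd
        intro h
        exact hnd.2.2 v h v (List.mem_singleton_self v) rfl
      by_cases hS : ∃ u ∈ p, A u v ∧ ∀ w ∈ p, A v w → ¬ A w u
      · -- there is a vertex dominating v and all out-neighbours of v
        obtain ⟨p₁, s, p₂, rfl, ⟨hsv, hsdom⟩, hfirst⟩ := exists_first_split hS
        match p₁ with
        | [] =>
          -- s is the head and is an in-neighbour of v: drop it
          have hLM' : LM A (p₂ ++ [v]) := by
            intro t' p' x' q' heq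
            exact hLM (s :: t') p' x' q' (by simp [heq])
          have hnd' : (p₂ ++ [v]).Nodup := by
            simp only [List.nil_append] at hnd ⊢
            exact hnd.of_cons
          have hlen' : p₂.length ≤ n := by
            simp only [List.nil_append, List.length_cons] at hlen
            omega
          have ihh := ih p₂ v hlen' hLM' hnd'
          have hsv' : ¬ A v s := by
            have := (hT.2 s v (by rintro rfl; simp at hvp)).1 hsv
            exact this
          calc ([] ++ s :: p₂).countP (fun u => decide (A v u))
              = p₂.countP (fun u => decide (A v u)) := by
                simp [List.countP_cons, hsv']
            _ ≤ p₂.countP (fun u => decide ((¬ A v u) ∧ ∃ w ∈ p₂, A v w ∧ A w u)) := ihh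
            _ ≤ ([] ++ s :: p₂).countP
                (fun u => decide ((¬ A v u) ∧ ∃ w ∈ [] ++ s :: p₂, A v w ∧ A w u)) := by
                simp only [List.nil_append]
                calc p₂.countP (fun u => decide ((¬ A v u) ∧ ∃ w ∈ p₂, A v w ∧ A w u))
                    ≤ p₂.countP
                      (fun u => decide ((¬ A v u) ∧ ∃ w ∈ s :: p₂, A v w ∧ A w u)) := by
                      apply List.countP_mono_left
                      intro a _ h
                      simp only [decide_eq_true_eq] at h ⊢
                      obtain ⟨h1, w, hw, h2⟩ := h
                      exact ⟨h1, w, List.mem_cons_of_mem _ hw, h2⟩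
                  _ ≤ (s :: p₂).countP
                      (fun u => decide ((¬ A v u) ∧ ∃ w ∈ s :: p₂, A v w ∧ A w u)) := by
                      rw [List.countP_cons]; omega
        | y :: p₁' =>
          set p₁ : List V := y :: p₁' with hp₁
          set p : List V := p₁ ++ s :: p₂ with hp
          -- recurse on the suffix s :: p₂ ++ [v]
          have hLM' : LM A ((s :: p₂) ++ [v]) := by
            intro t' p' x' q' heq
            refine hLM (p₁ ++ t') p' x' q' ?_
            simp [hp, heq]
          have hnd' : ((s :: p₂) ++ [v]).Nodup := by
            have : p ++ [v] = p₁ ++ ((s :: p₂) ++ [v]) := by simp [hp]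
            rw [this, List.nodup_append] at hnd
            exact hnd.2.1
          have hlen' : (s :: p₂).length ≤ n := by
            simp only [hp, List.length_append, List.length_cons, hp₁] at hlen ⊢
            omega
          have ihh := ih (s :: p₂) v hlen' hLM' hnd'
          -- facts about s
          have hsp₁ : s ∉ p₁ := by
            rw [List.nodup_append] at hnd
            have := hnd.1
            rw [hp, List.nodup_append] at this
            exact fun h => this.2.2 s h s List.mem_cons_self rfl
          -- prefix inequality chain
          have hchain1 : p₁.countP (fun u => decide (A v u)) ≤
              p₁.countP (fun u => decide (A s u)) := by
            apply List.countP_mono_left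
            intro u hu h
            simp only [decide_eq_true_eq] at h ⊢
            have hus : ¬ A u s := hsdom u (by rw [hp]; exact List.mem_append_left _ hu) h
            have hne : s ≠ u := by rintro rfl; exact hsp₁ hu
            by_contra hsu
            exact hus (((hT.2 u s hne.symm)).2 hsu)
          have hchain2 : p₁.countP (fun u => decide (A s u)) ≤
              p₁.countP (fun u => decide (A u s)) := by
            refine hLM [] p₁ s (p₂ ++ [v]) ?_
            simp [hp]
          have hchain3 : p₁.countP (fun u => decide (A u s)) ≤
              p₁.countP (fun u => decide ((¬ A v u) ∧ ∃ w ∈ p, A v w ∧ A w u)) := by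
            apply List.countP_mono_left
            intro u hu h
            simp only [decide_eq_true_eq] at h ⊢
            have hup : u ∈ p := by rw [hp]; exact List.mem_append_left _ hu
            have hnvu : ¬ A v u := fun hvu => hsdom u hup hvu h
            have huv : A u v := by
              have hne : u ≠ v := by rintro rfl; exact hvp hup
              exact (hT.2 u v hne).2 hnvu
            have hnS : ¬ (A u v ∧ ∀ w ∈ p, A v w → ¬ A w u) := hfirst u hu
            push_neg at hnS
            obtain ⟨w, hw, hvw, hwu⟩ := hnS huv
            exact ⟨hnvu, w, hw, hvw, hwu⟩
          -- suffix inequality chain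
          have hchain4 : (s :: p₂).countP (fun u => decide ((¬ A v u) ∧
              ∃ w ∈ s :: p₂, A v w ∧ A w u)) ≤
              (s :: p₂).countP (fun u => decide ((¬ A v u) ∧ ∃ w ∈ p, A v w ∧ A w u)) := by
            apply List.countP_mono_left
            intro u _ h
            simp only [decide_eq_true_eq] at h ⊢
            obtain ⟨h1, w, hw, h2⟩ := h
            exact ⟨h1, w, by rw [hp]; exact List.mem_append_right _ hw, h2⟩
          have hsplit1 : p.countP (fun u => decide (A v u)) =
              p₁.countP (fun u => decide (A v u)) +
              (s :: p₂).countP (fun u => decide (A v u)) := by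
            rw [hp, List.countP_append]
          have hsplit2 : p.countP (fun u => decide ((¬ A v u) ∧ ∃ w ∈ p, A v w ∧ A w u)) =
              p₁.countP (fun u => decide ((¬ A v u) ∧ ∃ w ∈ p, A v w ∧ A w u)) +
              (s :: p₂).countP (fun u => decide ((¬ A v u) ∧ ∃ w ∈ p, A v w ∧ A w u)) := by
            rw [hp, List.countP_append]
          omega
      · -- every in-neighbour of v is beaten by some out-neighbour of v
        push_neg at hS
        have h1 : p.countP (fun u => decide (A v u)) ≤
            p.countP (fun u => decide (A u v)) := hLM [] p v [] (by simp)
        have h2 : p.countP (fun u => decide (A u v)) ≤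
            p.countP (fun u => decide ((¬ A v u) ∧ ∃ w ∈ p, A v w ∧ A w u)) := by
          apply List.countP_mono_left
          intro u hu h
          simp only [decide_eq_true_eq] at h ⊢
          have hne : u ≠ v := by rintro rfl; exact hvp hu
          have hnvu : ¬ A v u := (hT.2 u v hne).1 h
          obtain ⟨w, hw, hvw, hwu⟩ := hS u hu h
          exact ⟨hnvu, w, hw, hvw, hwu⟩
        omega

end DecAux

end Aux

/-- Every tournament has a vertex with the second neighborhood property. -/


theorem every_tournament_has_SNP_vertex [Fintype V] [Nonempty V]
    (A : V → V → Prop) (hT : IsTournament A) :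
    ∃ v : V, SNP A v := by
  classical
  obtain ⟨l, hperm, hLM⟩ := exists_LM A (Finset.univ : Finset V).toList
  have hnd : l.Nodup := (List.Perm.nodup_iff hperm).2 (Finset.nodup_toList _)
  rcases List.eq_nil_or_concat l with rfl | ⟨p, v, rfl⟩
  · have h0 : (Finset.univ : Finset V).toList = [] := hperm.symm.eq_nil
    rw [Finset.toList_eq_nil] at h0
    exact absurd h0 (Finset.univ_nonempty).ne_empty
  · simp only [List.concat_eq_append] at hperm hLM hnd
    have hmem : ∀ u : V, u ∈ p ++ [v] := fun u =>
      hperm.symm.mem_iff.1 (Finset.mem_toList.2 (Finset.mem_univ u))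
    have hvp : v ∉ p := by
      rw [List.nodup_append] at hnd
      exact fun h => hnd.2.2 v h v (List.mem_singleton_self v) rfl
    have hup : ∀ u : V, u ≠ v → u ∈ p := by
      intro u hu
      rcases List.mem_append.1 (hmem u) with h | h
      · exact h
      · exact absurd (List.mem_singleton.1 h) hu
    have hnp : p.Nodup := by
      rw [List.nodup_append] at hnd; exact hnd.1
    have hkey := key A hT p.length p v le_rfl hLM hnd
    refine ⟨v, ?_⟩
    unfold SNP
    have c1 : (Nplus A v).ncard = p.countP (fun u => decide (A v u)) := by
      have hset : Nplus A v = ↑((p.filter (fun u => decide (A v u))).toFinset) := by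
        ext u
        simp only [Nplus, Set.mem_setOf_eq, Finset.coe_sort_coe, List.mem_toFinset,
          Finset.mem_coe, List.mem_filter, decide_eq_true_eq]
        constructor
        · intro h
          have hne : u ≠ v := fun he => hT.1 v (he ▸ h)
          exact ⟨hup u hne, h⟩
        · exact fun h => h.2
      rw [hset, Set.ncard_coe_finset, List.toFinset_card_of_nodup (hnp.filter _),
        List.countP_eq_length_filter]
    have c2 : (Npp A v).ncard =
        p.countP (fun u => decide ((¬ A v u) ∧ ∃ w ∈ p, A v w ∧ A w u)) := by
      have hset : Npp A v =
          ↑((p.filter (fun u => decide ((¬ A v u) ∧ ∃ w ∈ p, A v w ∧ A w u))).toFinset) := by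
        ext u
        simp only [Npp, Set.mem_setOf_eq, Finset.coe_sort_coe, List.mem_toFinset,
          Finset.mem_coe, List.mem_filter, decide_eq_true_eq]
        constructor
        · rintro ⟨hne, hnvu, w, hvw, hwu⟩
          have hwv : w ≠ v := fun he => hT.1 v (he ▸ hvw)
          exact ⟨hup u hne, hnvu, w, hup w hwv, hvw, hwu⟩
        · rintro ⟨hu, hnvu, w, hw, hvw, hwu⟩
          exact ⟨fun he => hvp (he ▸ hu), hnvu, w, hvw, hwu⟩
      rw [hset, Set.ncard_coe_finset, List.toFinset_card_of_nodup (hnp.filter _),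
        List.countP_eq_length_filter]
    rw [c1, c2]
    exact hkey
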